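/- Let (R, m) be a Noetherian local domain birationally dominated by a discrete valuation ring V (rank 1 discrete). Then V equals the union of the sequence of local quadratic transforms of R along V. -/

import Mathlib

section LQT

variable (F : Type) [Field F] {Γ : Type} [AddCommGroup Γ] [LinearOrder Γ] [IsOrderedAddMonoid Γ]

/-- The maximal ideal (as a set) of a local subring `A` of `F` dominated by the valuation
ring of the (additive) valuation `v`. -/
def lqtMaxSet (v : F → Γ) (A : Subring F) : Set F :=
  {a | a ∈ A ∧ (a = 0 ∨ 0 < v a)}

/-- The ring `A[m_A/x]`. -/
def lqtBlowup (v : F → Γ) (A : Subring F) (x : F) : Subring F :=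
  Subring.closure ((A : Set F) ∪ {y | ∃ a ∈ lqtMaxSet F v A, y * x = a})

/-- The localization of a subring `B` of `F` at the center of the valuation `v`. -/
def lqtLocalize (v : F → Γ) (B : Subring F) : Set F :=
  {y | ∃ b ∈ B, ∃ s ∈ B, s ≠ 0 ∧ v s = 0 ∧ y * s = b}

/-- `A'` is the local quadratic transform of `A` along the valuation `v`. -/
def IsLQTAlong (v : F → Γ) (A A' : Subring F) : Prop :=
  ∃ x ∈ lqtMaxSet F v A, x ≠ 0 ∧ (∀ a ∈ lqtMaxSet F v A, a ≠ 0 → v x ≤ v a) ∧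
    (A' : Set F) = lqtLocalize F v (lqtBlowup F v A x)

end LQT

/-- Let `(R₀, m₀)` be a Noetherian local domain with quotient field `F`, birationally
dominated by a rank 1 discrete valuation ring `V` (given by a `ℤ`-valued valuation `v`
on `F` with value group `ℤ`).  Then `V` equals the union of the sequence of local
quadratic transforms of `R₀` along `V`. -/
theorem dvr_eq_union_of_lqt_sequence
    (F : Type) [Field F] (v : F → ℤ)
    (hmul : ∀ a b : F, a ≠ 0 → b ≠ 0 → v (a * b) = v a + v b)
    (hadd : ∀ a b : F, a ≠ 0 → b ≠ 0 → a + b ≠ 0 → min (v a) (v b) ≤ v (a + b))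
    (hval1 : ∃ a : F, a ≠ 0 ∧ v a = 1)
    (V : Subring F) (hV : ∀ a : F, a ≠ 0 → (a ∈ V ↔ 0 ≤ v a))
    (R : ℕ → Subring F)
    (hNoeth : ∀ n, IsNoetherianRing (R n)) (hLocal : ∀ n, IsLocalRing (R n))
    (hsub : ∀ n, (R n : Set F) ⊆ V)
    (hdom : ∀ n, ∀ a ∈ R n, a ≠ 0 → v a = 0 → ∃ b ∈ R n, a * b = 1)
    (hfrac : ∀ y : F, ∃ a ∈ R 0, ∃ b ∈ R 0, b ≠ 0 ∧ y * b = a)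
    (hLQT : ∀ n, IsLQTAlong F v (R n) (R (n + 1))) :
    (V : Set F) = ⋃ n, (R n : Set F) := by

  have hv1 : v 1 = 0 := by
    have := hmul 1 1 one_ne_zero one_ne_zero
    simp at this; omega
  have key : ∀ k : ℕ, ∀ n, ∀ a b c : F, a ≠ 0 → 0 ≤ v a → b ∈ R n → c ∈ R n → c ≠ 0 →
      a * c = b → (v c).toNat = k → ∃ m, a ∈ R m := by
    intro k
    induction k using Nat.strong_induction_on with
    | _ k ih =>
      intro n a b c ha hva hb hc hc0 habc hk
      have hvc0 : 0 ≤ v c := (hV c hc0).mp (hsub n hc)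
      by_cases hvc : v c = 0
      · obtain ⟨d, hd, hcd⟩ := hdom n c hc hc0 hvc
        refine ⟨n, ?_⟩
        have hab : a = b * d := by
          calc a = a * (c * d) := by rw [hcd, mul_one]
          _ = b * d := by rw [← mul_assoc, habc]
        rw [hab]; exact mul_mem hb hd
      · have hvcpos : 0 < v c := lt_of_le_of_ne hvc0 (Ne.symm hvc)
        have hb0 : b ≠ 0 := habc ▸ mul_ne_zero ha hc0
        have hvb : 0 < v b := by
          have := hmul a c ha hc0
          rw [habc] at this; omega
        obtain ⟨x, hxm, hx0, hxmin, hR'⟩ := hLQT n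
        have hvx : 0 < v x := hxm.2.resolve_left hx0
        have hvxc : v x ≤ v c := hxmin c ⟨hc, Or.inr hvcpos⟩ hc0
        set b' := b / x with hb'def
        set c' := c / x with hc'def
        have hb'x : b' * x = b := div_mul_cancel₀ b hx0
        have hc'x : c' * x = c := div_mul_cancel₀ c hx0
        have hb'B : b' ∈ lqtBlowup F v (R n) x :=
          Subring.subset_closure (Or.inr ⟨b, ⟨hb, Or.inr hvb⟩, hb'x⟩)
        have hc'B : c' ∈ lqtBlowup F v (R n) x :=
          Subring.subset_closure (Or.inr ⟨c, ⟨hc, Or.inr hvcpos⟩, hc'x⟩)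
        have hb'mem : b' ∈ R (n + 1) := by
          have : b' ∈ (R (n + 1) : Set F) := by
            rw [hR']
            exact ⟨b', hb'B, 1, one_mem _, one_ne_zero, hv1, mul_one _⟩
          exact this
        have hc'mem : c' ∈ R (n + 1) := by
          have : c' ∈ (R (n + 1) : Set F) := by
            rw [hR']
            exact ⟨c', hc'B, 1, one_mem _, one_ne_zero, hv1, mul_one _⟩
          exact this
        have hc'0 : c' ≠ 0 := by
          intro h; apply hc0; rw [← hc'x, h, zero_mul]
        have hac' : a * c' = b' := by
          apply mul_right_cancel₀ hx0
          rw [mul_assoc, hc'x, habc, hb'x]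
        have hvc' : v c = v c' + v x := by
          have := hmul c' x hc'0 hx0
          rw [hc'x] at this; omega
        have hlt : (v c').toNat < k := by omega
        exact ih _ hlt (n + 1) a b' c' ha hva hb'mem hc'mem hc'0 hac' rfl
  apply Set.Subset.antisymm
  · intro a haV
    by_cases ha : a = 0
    · exact Set.mem_iUnion.mpr ⟨0, ha ▸ (R 0).zero_mem⟩
    · have hva : 0 ≤ v a := (hV a ha).mp haV
      obtain ⟨b, hb, c, hc, hc0, habc⟩ := hfrac a
      obtain ⟨m, hm⟩ := key (v c).toNat 0 a b c ha hva hb hc hc0 habc rfl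
      exact Set.mem_iUnion.mpr ⟨m, hm⟩
  · exact Set.iUnion_subset hsub
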